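/- Let (X,‖·‖) be a Banach space, K ≥ 1, and let J̃, J̃_i : B → ℝ (i ∈ ℕ) be continuous convex non-negative functions on the open unit ball B of X with J̃(0) = 0. Let J (resp. J_i) be the Minkowski functional of {x ∈ X : J̃(x) ≤ 1/2} (resp. {x ∈ X : J̃_i(x) ≤ 1/2}), and assume these are equivalent norms on X satisfying 2‖x‖ ≤ J(x) ≤ 2K‖x‖ and 2‖x‖ ≤ J_i(x) ≤ 2K‖x‖ for all x ∈ X and all i. If J̃_i → J̃ uniformly on B, then J_i → J uniformly on bounded subsets of X. -/

import Mathlib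

open Metric

open Set
open scoped Pointwise

/-- Membership from `gauge < 1` for a star-shaped set whose gauge dominates the norm. -/
lemma aux_mem_of_gauge_lt_one {X : Type*} [NormedAddCommGroup X] [NormedSpace ℝ X]
    {C : Set X} (hC : Convex ℝ C) (h0 : (0 : X) ∈ C) {x : X}
    (hlb : 2 * ‖x‖ ≤ gauge C x) (h : gauge C x < 1) : x ∈ C := by
  rcases eq_or_ne x 0 with rfl | hx
  · exact h0
  have hne : {r : ℝ | 0 < r ∧ x ∈ r • C}.Nonempty := by
    by_contra hemp
    rw [Set.not_nonempty_iff_eq_empty] at hemp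
    have h0' : gauge C x = 0 := by rw [gauge, hemp, Real.sInf_empty]
    have hxpos : 0 < ‖x‖ := norm_pos_iff.mpr hx
    rw [h0'] at hlb; linarith
  obtain ⟨b, ⟨hb0, y, hy, rfl⟩, hb1⟩ := exists_lt_of_csInf_lt hne h
  have := hC h0 hy (by linarith : (0:ℝ) ≤ 1 - b) hb0.le (by ring)
  simpa using this

/-- The key inclusion: if `g` is convex on the unit ball, `g 0 ≤ δ/4` and `g ≤ f + δ/4` on the
ball, then the gauge set of `f` is contained in `(1+δ)` times the gauge set of `g`. -/
lemma aux_incl {X : Type*} [NormedAddCommGroup X] [NormedSpace ℝ X] {f g : X → ℝ} {δ : ℝ}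
    (hg_conv : ConvexOn ℝ (ball (0 : X) 1) g) (hδ : 0 < δ) (hδ1 : δ ≤ 1)
    (h0b : (0 : X) ∈ ball (0 : X) 1)
    (hg0 : g 0 ≤ δ / 4) (hfg : ∀ x ∈ ball (0 : X) 1, g x ≤ f x + δ / 4) :
    (ball (0 : X) 1 ∩ {y | f y ≤ 1 / 2}) ⊆ (1 + δ) • (ball (0 : X) 1 ∩ {y | g y ≤ 1 / 2}) := by
  intro x hx
  obtain ⟨hxb, hxf⟩ := hx
  have hxf' : f x ≤ 1 / 2 := hxf
  have h1δ : (0 : ℝ) < 1 + δ := by linarith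
  set y := (1 + δ)⁻¹ • x with hy
  have hyb : y ∈ ball (0 : X) 1 := by
    rw [mem_ball_zero_iff] at hxb ⊢
    rw [hy, norm_smul, Real.norm_eq_abs, abs_of_pos (inv_pos.mpr h1δ)]
    have hinv : (1 + δ)⁻¹ ≤ 1 := by
      rw [inv_le_one_iff₀]; right; linarith
    nlinarith [norm_nonneg x, inv_pos.mpr h1δ]
  have hgy : g y ≤ 1 / 2 := by
    have hconv := hg_conv.2 h0b hxb (by positivity : (0:ℝ) ≤ δ / (1 + δ))
      (by positivity : (0:ℝ) ≤ (1 + δ)⁻¹) (by field_simp; ring)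
    rw [smul_zero, zero_add] at hconv
    have hgx : g x ≤ f x + δ / 4 := hfg x hxb
    have : g y ≤ (δ / (1 + δ)) * (δ / 4) + (1 + δ)⁻¹ * (1 / 2 + δ / 4) := by
      refine hconv.trans ?_
      have h1 : g 0 ≤ δ / 4 := hg0
      have h2 : g x ≤ 1 / 2 + δ / 4 := by linarith
      have ha : (0:ℝ) ≤ δ / (1 + δ) := by positivity
      have hb : (0:ℝ) ≤ (1 + δ)⁻¹ := by positivity
      exact add_le_add (mul_le_mul_of_nonneg_left h1 ha) (mul_le_mul_of_nonneg_left h2 hb)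
    refine this.trans ?_
    have heq : δ / (1 + δ) * (δ / 4) + (1 + δ)⁻¹ * (1 / 2 + δ / 4)
        = (δ * (δ / 4) + (1 / 2 + δ / 4)) / (1 + δ) := by
      field_simp
    rw [heq, div_le_iff₀ h1δ]
    nlinarith
  exact ⟨y, ⟨hyb, hgy⟩, smul_inv_smul₀ h1δ.ne' x⟩

/-- **Hájek–Procházka, Section 5 (final argument).** Let `J̃, J̃_i` be continuous convex
non-negative functions on the open unit ball `B` with `J̃ 0 = 0`, and let `J`, `J_i` be the
Minkowski functionals of `{x ∈ B : J̃ x ≤ 1/2}`, `{x ∈ B : J̃_i x ≤ 1/2}`; assume these are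
equivalent norms with `2‖x‖ ≤ J x ≤ 2K‖x‖` and `2‖x‖ ≤ J_i x ≤ 2K‖x‖`. If `J̃_i → J̃`
uniformly on `B`, then `J_i → J` uniformly on bounded sets. -/
theorem gauge_approximation {X : Type*} [NormedAddCommGroup X] [NormedSpace ℝ X]
    [CompleteSpace X] (K : ℝ) (hK : 1 ≤ K)
    (Jt : X → ℝ) (Jti : ℕ → X → ℝ)
    (hJt_cont : ContinuousOn Jt (ball (0 : X) 1))
    (hJt_conv : ConvexOn ℝ (ball (0 : X) 1) Jt)
    (hJt_nn : ∀ x ∈ ball (0 : X) 1, 0 ≤ Jt x)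
    (hJt_zero : Jt 0 = 0)
    (hJti_cont : ∀ i, ContinuousOn (Jti i) (ball (0 : X) 1))
    (hJti_conv : ∀ i, ConvexOn ℝ (ball (0 : X) 1) (Jti i))
    (hJti_nn : ∀ i, ∀ x ∈ ball (0 : X) 1, 0 ≤ Jti i x)
    (hJti_zero : ∀ i, Jti i 0 = 0)
    (hJ_equiv : ∀ x : X,
      2 * ‖x‖ ≤ gauge (ball (0 : X) 1 ∩ {y | Jt y ≤ 1 / 2}) x ∧
      gauge (ball (0 : X) 1 ∩ {y | Jt y ≤ 1 / 2}) x ≤ 2 * K * ‖x‖)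
    (hJi_equiv : ∀ (i : ℕ) (x : X),
      2 * ‖x‖ ≤ gauge (ball (0 : X) 1 ∩ {y | Jti i y ≤ 1 / 2}) x ∧
      gauge (ball (0 : X) 1 ∩ {y | Jti i y ≤ 1 / 2}) x ≤ 2 * K * ‖x‖)
    (hunif : ∀ ε > (0 : ℝ), ∃ i₀ : ℕ, ∀ i ≥ i₀, ∀ x ∈ ball (0 : X) 1,
      |Jti i x - Jt x| ≤ ε) :
    ∀ R > (0 : ℝ), ∀ ε > (0 : ℝ), ∃ i₀ : ℕ, ∀ i ≥ i₀, ∀ x : X, ‖x‖ ≤ R →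
      |gauge (ball (0 : X) 1 ∩ {y | Jti i y ≤ 1 / 2}) x -
        gauge (ball (0 : X) 1 ∩ {y | Jt y ≤ 1 / 2}) x| ≤ ε := by
  intro R hR ε hε
  have hK0 : (0:ℝ) < K := lt_of_lt_of_le one_pos hK
  set C : Set X := ball (0 : X) 1 ∩ {y | Jt y ≤ 1 / 2} with hC_def
  set Ci : ℕ → Set X := fun i => ball (0 : X) 1 ∩ {y | Jti i y ≤ 1 / 2} with hCi_def
  have h0b : (0 : X) ∈ ball (0 : X) 1 := mem_ball_self one_pos
  -- convexity and 0 ∈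
  have hC_conv : Convex ℝ C := hJt_conv.convex_le (1 / 2)
  have hCi_conv : ∀ i, Convex ℝ (Ci i) := fun i => (hJti_conv i).convex_le (1 / 2)
  have h0C : (0 : X) ∈ C := ⟨h0b, by simp [hJt_zero]⟩
  have h0Ci : ∀ i, (0 : X) ∈ Ci i := fun i => ⟨h0b, by simp [hJti_zero i]⟩
  -- absorbency
  have hsmall : ∀ (D : Set X), Convex ℝ D → (0:X) ∈ D →
      (∀ x : X, 2 * ‖x‖ ≤ gauge D x ∧ gauge D x ≤ 2 * K * ‖x‖) →
      Absorbent ℝ D := by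
    intro D hDconv h0D hDeq
    have hsub : ball (0 : X) (1 / (2 * K)) ⊆ D := by
      intro x hx
      rw [mem_ball_zero_iff] at hx
      refine aux_mem_of_gauge_lt_one hDconv h0D (hDeq x).1 ?_
      calc gauge D x ≤ 2 * K * ‖x‖ := (hDeq x).2
        _ < 2 * K * (1 / (2 * K)) := by
            apply mul_lt_mul_of_pos_left hx; positivity
        _ = 1 := by field_simp
    exact fun x => ((absorbent_ball_zero (𝕜 := ℝ) (by positivity : (0:ℝ) < 1 / (2 * K))) x).mono_left hsub
  have hCabs : Absorbent ℝ C := hsmall C hC_conv h0C hJ_equiv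
  have hCiabs : ∀ i, Absorbent ℝ (Ci i) := fun i => hsmall (Ci i) (hCi_conv i) (h0Ci i) (hJi_equiv i)
  -- choose δ
  set δ : ℝ := min 1 (ε / (2 * K * R)) with hδ_def
  have hδpos : 0 < δ := lt_min one_pos (by positivity)
  have hδ1 : δ ≤ 1 := min_le_left _ _
  have h1δ : (0:ℝ) < 1 + δ := by linarith
  have hδε : δ * (2 * K * R) ≤ ε := by
    have := min_le_right 1 (ε / (2 * K * R))
    calc δ * (2 * K * R) ≤ ε / (2 * K * R) * (2 * K * R) := by
          apply mul_le_mul_of_nonneg_right this; positivity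
      _ = ε := by field_simp
  obtain ⟨i₀, hi₀⟩ := hunif (δ / 4) (by positivity)
  refine ⟨i₀, fun i hi x hxR => ?_⟩
  -- inclusions
  have hinclA : C ⊆ (1 + δ) • Ci i := by
    refine aux_incl (hJti_conv i) hδpos hδ1 h0b ?_ ?_
    · have := hi₀ i hi 0 h0b
      rw [hJt_zero, sub_zero] at this
      exact (abs_le.mp this).2
    · intro z hz
      have := hi₀ i hi z hz
      have h1 := (abs_le.mp this).2
      linarith
  have hinclB : Ci i ⊆ (1 + δ) • C := by
    refine aux_incl hJt_conv hδpos hδ1 h0b ?_ ?_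
    · rw [hJt_zero]; positivity
    · intro z hz
      have := hi₀ i hi z hz
      have h1 := (abs_le.mp this).1
      linarith
  -- gauge inequalities
  have hsmulCi : gauge ((1 + δ) • Ci i) x = (1 + δ)⁻¹ * gauge (Ci i) x := by
    rw [gauge_smul_left_of_nonneg h1δ.le]; simp
  have hsmulC : gauge ((1 + δ) • C) x = (1 + δ)⁻¹ * gauge C x := by
    rw [gauge_smul_left_of_nonneg h1δ.le]; simp
  have hA : (1 + δ)⁻¹ * gauge (Ci i) x ≤ gauge C x := by
    rw [← hsmulCi]; exact gauge_mono hCabs hinclA x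
  have hB : (1 + δ)⁻¹ * gauge C x ≤ gauge (Ci i) x := by
    rw [← hsmulC]; exact gauge_mono (hCiabs i) hinclB x
  have hgC : gauge C x ≤ 2 * K * R := le_trans (hJ_equiv x).2
    (by apply mul_le_mul_of_nonneg_left hxR; positivity)
  have hgCi : gauge (Ci i) x ≤ 2 * K * R := le_trans (hJi_equiv i x).2
    (by apply mul_le_mul_of_nonneg_left hxR; positivity)
  have hgC0 : 0 ≤ gauge C x := le_trans (by positivity) (hJ_equiv x).1
  have hgCi0 : 0 ≤ gauge (Ci i) x := le_trans (by positivity) (hJi_equiv i x).1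
  rw [abs_le]
  have hA' : gauge (Ci i) x ≤ (1 + δ) * gauge C x := by
    rw [← inv_mul_le_iff₀ h1δ] at *; exact hA
  have hB' : gauge C x ≤ (1 + δ) * gauge (Ci i) x := by
    rw [← inv_mul_le_iff₀ h1δ] at *; exact hB
  constructor
  · nlinarith
  · nlinarith
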